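/- arXiv:1407.6258 — 2 statements merged into one kernel-verified Lean document; each statement's English description precedes it below -/
import Mathlib

section
/- Let P be a labeled ranked poset on n elements. There exists a family (c_K) of nonnegative integers indexed by the set compositions K of {1,…,n} such that 𝐅_P^(N) = Σ_K c_K 𝐅_{P_K}^(N) in the free ℚ-algebra on a₁,…,a_N, for every N ≥ 1. -/
open scoped Classical

noncomputable section

/-- The free `ℚ`-algebra on noncommuting generators `a₁, a₂, …` (generator `j` is `a_{j+1}`). -/
abbrev NC1 : Type := MonoidAlgebra ℚ (FreeMonoid ℕ)

/-- The free `ℚ`-algebra on two alphabets of noncommuting generators: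
`Sum.inl j` is `b_{j+1}` and `Sum.inr j` is `d_{j+1}`. -/
abbrev NC2 : Type := MonoidAlgebra ℚ (FreeMonoid (ℕ ⊕ ℕ))

/-- The order condition for `r : Fin n → Fin N` with respect to a partial order `le`
and rank function `ht` on `{1,…,n}` (represented as `Fin n`). -/
def NCOrderCond {n N : ℕ} (le : Fin n → Fin n → Prop) (ht : Fin n → ℕ)
    (r : Fin n → Fin N) : Prop :=
  (∀ x y, le x y → r x ≤ r y) ∧ ∀ x y, le x y → x ≠ y → Odd (ht x) → r x < r y

/-- `(le, ht)` is a labeled ranked poset structure on `Fin n`: `le` is a partial order,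
minimal elements have height `0`, and covering relations increase the height by one. -/
def IsLRPoset {n : ℕ} (le : Fin n → Fin n → Prop) (ht : Fin n → ℕ) : Prop :=
  (∀ x, le x x) ∧ (∀ x y z, le x y → le y z → le x z) ∧
    (∀ x y, le x y → le y x → x = y) ∧
    (∀ x, (∀ y, le y x → y = x) → ht x = 0) ∧
    ∀ x y, le x y → x ≠ y → (∀ z, le x z → le z y → z = x ∨ z = y) → ht y = ht x + 1

/-- The noncommutative generating function `𝐅_P^(N)` (generator `j` is `a_{j+1}`). -/
def ncF {n : ℕ} (le : Fin n → Fin n → Prop) (ht : Fin n → ℕ) (N : ℕ) : NC1 :=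
  ∑ r : Fin n → Fin N,
    if NCOrderCond le ht r then
      MonoidAlgebra.of ℚ (FreeMonoid ℕ) (FreeMonoid.ofList (List.ofFn fun i => (r i : ℕ)))
    else 0

/-- The noncommutative generating function `𝐍_P^(m)` in the two alphabets `b`, `d`. -/
def ncN {n : ℕ} (le : Fin n → Fin n → Prop) (ht : Fin n → ℕ) (m : ℕ) : NC2 :=
  ∑ r : Fin n → Fin (m + 1),
    if NCOrderCond le ht r ∧ ∀ i, Odd (ht i) → (r i : ℕ) < m then
      MonoidAlgebra.of ℚ (FreeMonoid (ℕ ⊕ ℕ)) (FreeMonoid.ofList (List.ofFn fun i =>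
        if Even (ht i) then (Sum.inl (r i : ℕ) : ℕ ⊕ ℕ) else Sum.inr (r i : ℕ)))
    else 0

/-- The generator `a_{j+1}` of `NC1`. -/
def genA (j : ℕ) : NC1 := MonoidAlgebra.of ℚ (FreeMonoid ℕ) (FreeMonoid.of j)

/-- The generator `b_{j+1}` (for `Sum.inl j`) or `d_{j+1}` (for `Sum.inr j`) of `NC2`. -/
def bd (s : ℕ ⊕ ℕ) : NC2 := MonoidAlgebra.of ℚ (FreeMonoid (ℕ ⊕ ℕ)) (FreeMonoid.of s)

/-- The `ℚ`-algebra homomorphism of `NC1` substituting `φ j` for the generator `a_{j+1}`. -/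
def ncSubst1 (φ : ℕ → NC1) : NC1 →ₐ[ℚ] NC1 :=
  MonoidAlgebra.lift ℚ NC1 (FreeMonoid ℕ) (FreeMonoid.lift φ)

/-- The `ℚ`-algebra homomorphism of `NC2` substituting `φ s` for the generator `bd s`. -/
def ncSubst2 (φ : ℕ ⊕ ℕ → NC2) : NC2 →ₐ[ℚ] NC2 :=
  MonoidAlgebra.lift ℚ NC2 (FreeMonoid (ℕ ⊕ ℕ)) (FreeMonoid.lift φ)

/-- A set composition `(K₀,…,K_{ℓ-1})` of `{1,…,n}`, encoded as a surjection
`Fin n → Fin ℓ` sending each element to the index of its block. -/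
abbrev SetComp (n : ℕ) : Type :=
  {c : Σ ℓ : Fin (n + 1), Fin n → Fin ℓ // Function.Surjective c.2}

instance (n : ℕ) : Fintype (SetComp n) := Fintype.ofFinite _

/-- The rank function of the labeled ranked poset `P_K`: `ht i = s` for `i ∈ K_s`. -/
def SetComp.ht {n : ℕ} (K : SetComp n) (i : Fin n) : ℕ := (K.1.2 i : ℕ)

/-- The partial order of the labeled ranked poset `P_K`:
`i ≤ j` iff `i = j` or `i` lies in an earlier block than `j`. -/
def SetComp.le {n : ℕ} (K : SetComp n) (x y : Fin n) : Prop := x = y ∨ K.1.2 x < K.1.2 y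

/-- The order of the disjoint union `P ⊕ Q` on `Fin (n + n')`. -/
def sumLe {n n' : ℕ} (leP : Fin n → Fin n → Prop) (leQ : Fin n' → Fin n' → Prop)
    (x y : Fin (n + n')) : Prop :=
  (∃ (hx : (x : ℕ) < n) (hy : (y : ℕ) < n), leP ⟨x, hx⟩ ⟨y, hy⟩) ∨
  (∃ (_ : n ≤ (x : ℕ)) (_ : n ≤ (y : ℕ)),
    leQ ⟨(x : ℕ) - n, by have := x.isLt; omega⟩ ⟨(y : ℕ) - n, by have := y.isLt; omega⟩)

/-- The rank function of the disjoint union `P ⊕ Q` on `Fin (n + n')`. -/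
def sumHt {n n' : ℕ} (htP : Fin n → ℕ) (htQ : Fin n' → ℕ) (x : Fin (n + n')) : ℕ :=
  if h : (x : ℕ) < n then htP ⟨x, h⟩ else htQ ⟨(x : ℕ) - n, by have := x.isLt; omega⟩

namespace Stmt17Aux

variable {n N : ℕ} (le : Fin n → Fin n → Prop) (ht : Fin n → ℕ)

/-- strict order -/
def Plt (x y : Fin n) : Prop := le x y ∧ x ≠ y

variable {le ht}

lemma plt_trans (hP : IsLRPoset le ht) {x y z : Fin n}
    (h1 : Plt le x y) (h2 : Plt le y z) : Plt le x z := by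
  refine ⟨hP.2.1 _ _ _ h1.1 h2.1, fun e => ?_⟩
  subst e
  exact h1.2 (hP.2.2.1 _ _ h1.1 h2.1)

lemma exists_plt_maximal (hP : IsLRPoset le ht) :
    ∀ T : Finset (Fin n), T.Nonempty → ∃ w ∈ T, ∀ u ∈ T, ¬ Plt le w u := by
  intro T
  induction T using Finset.strongInduction with
  | _ T ih =>
    intro hT
    obtain ⟨a, ha⟩ := hT
    by_cases h : ∃ u ∈ T, Plt le a u
    · obtain ⟨u0, hu0, hau⟩ := h
      have hss : T.filter (fun u => Plt le a u) ⊂ T :=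
        Finset.filter_ssubset.mpr ⟨a, ha, fun h => h.2 rfl⟩
      obtain ⟨w, hw, hwmax⟩ := ih _ hss ⟨u0, Finset.mem_filter.mpr ⟨hu0, hau⟩⟩
      have hw' := Finset.mem_filter.mp hw
      refine ⟨w, hw'.1, fun u hu hwu => ?_⟩
      exact hwmax u (Finset.mem_filter.mpr ⟨hu, plt_trans hP hw'.2 hwu⟩) hwu
    · exact ⟨a, ha, fun u hu hau => h ⟨u, hu, hau⟩⟩

lemma exists_plt_minimal (hP : IsLRPoset le ht) :
    ∀ T : Finset (Fin n), T.Nonempty → ∃ w ∈ T, ∀ u ∈ T, ¬ Plt le u w := by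
  intro T
  induction T using Finset.strongInduction with
  | _ T ih =>
    intro hT
    obtain ⟨a, ha⟩ := hT
    by_cases h : ∃ u ∈ T, Plt le u a
    · obtain ⟨u0, hu0, hau⟩ := h
      have hss : T.filter (fun u => Plt le u a) ⊂ T :=
        Finset.filter_ssubset.mpr ⟨a, ha, fun h => h.2 rfl⟩
      obtain ⟨w, hw, hwmin⟩ := ih _ hss ⟨u0, Finset.mem_filter.mpr ⟨hu0, hau⟩⟩
      have hw' := Finset.mem_filter.mp hw
      refine ⟨w, hw'.1, fun u hu hwu => ?_⟩
      exact hwmin u (Finset.mem_filter.mpr ⟨hu, plt_trans hP hwu hw'.2⟩) hwu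
    · exact ⟨a, ha, fun u hu hau => h ⟨u, hu, hau⟩⟩

lemma cover_above (hP : IsLRPoset le ht) {z x : Fin n} (h : Plt le z x) :
    ∃ w, le z w ∧ Plt le w x ∧ ht x = ht w + 1 := by
  set T : Finset (Fin n) := Finset.univ.filter (fun w => le z w ∧ Plt le w x) with hT
  have hTne : T.Nonempty := ⟨z, by simp [hT, hP.1 z, h]⟩
  obtain ⟨w, hwT, hwmax⟩ := exists_plt_maximal hP T hTne
  rw [hT, Finset.mem_filter] at hwT
  obtain ⟨-, hzw, hwx⟩ := hwT
  refine ⟨w, hzw, hwx, ?_⟩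
  refine hP.2.2.2.2 w x hwx.1 hwx.2 ?_
  intro u hwu hux
  by_contra hcon
  push_neg at hcon
  refine hwmax u ?_ ⟨hwu, fun e => hcon.1 e.symm⟩
  simp only [hT, Finset.mem_filter, Finset.mem_univ, true_and]
  exact ⟨hP.2.1 _ _ _ hzw hwu, hux, hcon.2⟩

lemma ht_lt_aux (hP : IsLRPoset le ht) :
    ∀ m, ∀ {x z : Fin n}, ht x = m → Plt le z x → ht z < ht x := by
  intro m
  induction m using Nat.strong_induction_on with
  | _ m ih =>
    intro x z hm h
    obtain ⟨w, hzw, hwx, hcov⟩ := cover_above hP h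
    rcases eq_or_ne z w with rfl | hne
    · omega
    · have h1 : ht z < ht w := ih (ht w) (by omega) rfl ⟨hzw, hne⟩
      omega

/-- within an up-set, a strict relation between elements of equal `r`-value
is a cover with even bottom -/
lemma class_cover (hP : IsLRPoset le ht) {r : Fin n → Fin N} (hr : NCOrderCond le ht r)
    {S : Finset (Fin n)} (hup : ∀ x ∈ S, ∀ y, le x y → y ∈ S) :
    ∀ m, ∀ {x z : Fin n}, ht x = m → x ∈ S → z ∈ S → Plt le z x → r z = r x →
      ht x = ht z + 1 ∧ ht z % 2 = 0 := by
  intro m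
  induction m using Nat.strong_induction_on with
  | _ m ih =>
    intro x z hm hxS hzS hzx hrzx
    obtain ⟨w, hzw, hwx, hcov⟩ := cover_above hP hzx
    have hwS : w ∈ S := hup z hzS w hzw
    have hrw1 : r z ≤ r w := hr.1 z w hzw
    have hrw2 : r w ≤ r x := hr.1 w x hwx.1
    have hrzw : r z = r w := le_antisymm hrw1 (by rw [hrzx]; exact hrw2)
    rcases eq_or_ne z w with rfl | hne
    · refine ⟨hcov, ?_⟩
      by_contra hodd
      have hlt : r z < r x := hr.2 z x hzx.1 hzx.2 (Nat.odd_iff.mpr (by omega))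
      exact absurd hrzx (ne_of_lt hlt)
    · exfalso
      have hw := ih (ht w) (by omega) rfl hwS hzS ⟨hzw, hne⟩ hrzw
      have hlt : r w < r x := hr.2 w x hwx.1 hwx.2 (Nat.odd_iff.mpr (by omega))
      have heq : r w = r x := le_antisymm hrw2 (by rw [← hrzx, hrzw])
      exact absurd heq (ne_of_lt hlt)

end Stmt17Aux

namespace Stmt17Aux

variable {n N : ℕ} {le : Fin n → Fin n → Prop} {ht : Fin n → ℕ}

/-- the parity invariant on the minimum-value class -/
def Inv (ht : Fin n → ℕ) (r : Fin n → Fin N) (S : Finset (Fin n)) (s₀ : ℕ) : Prop :=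
  (s₀ % 2 = 0 → ∃ x ∈ S, (∀ y ∈ S, r x ≤ r y) ∧ ht x % 2 = 0) ∧
  (s₀ % 2 = 1 → ∀ x ∈ S, (∀ y ∈ S, r x ≤ r y) → ht x % 2 = 1)

lemma greedy (hP : IsLRPoset le ht) {r : Fin n → Fin N} (hr : NCOrderCond le ht r) :
    ∀ S : Finset (Fin n), ∀ s₀ : ℕ,
      (∀ x ∈ S, ∀ y, le x y → y ∈ S) →
      (S.Nonempty → Inv ht r S s₀) →
      ∃ (ℓ : ℕ) (κ : Fin n → ℕ),
        (∀ x ∈ S, s₀ ≤ κ x ∧ κ x < s₀ + ℓ ∧ κ x % 2 = ht x % 2) ∧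
        (∀ x ∈ S, ∀ y ∈ S, κ x < κ y → r x ≤ r y ∧ (κ x % 2 = 1 → r x < r y)) ∧
        (∀ x ∈ S, ∀ y ∈ S, Plt le x y → κ x < κ y) ∧
        (∀ t, s₀ ≤ t → t < s₀ + ℓ → ∃ x ∈ S, κ x = t) := by
  intro S
  induction S using Finset.strongInduction with
  | _ S ih =>
    intro s₀ hup hinv
    rcases S.eq_empty_or_nonempty with rfl | hSne
    · exact ⟨0, fun _ => 0, by simp, by simp, by simp, by omega⟩
    have hinv' := hinv hSne
    -- candidates: right parity and minimal in S
    set cand : Fin n → Prop := fun x => ht x % 2 = s₀ % 2 ∧ ∀ z ∈ S, ¬ Plt le z x with hcand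
    -- the next block
    set B : Finset (Fin n) :=
      S.filter (fun x => cand x ∧ ∀ y ∈ S, ¬ cand y →
        (r x ≤ r y ∧ (s₀ % 2 = 1 → r x < r y))) with hBdef
    have hBsub : B ⊆ S := Finset.filter_subset _ _
    have hBmem : ∀ x, x ∈ B ↔ x ∈ S ∧ cand x ∧ ∀ y ∈ S, ¬ cand y →
        (r x ≤ r y ∧ (s₀ % 2 = 1 → r x < r y)) := by
      intro x; rw [hBdef, Finset.mem_filter]
    -- a minimum-value element which is P-minimal among the minimum-value class
    -- (used in both parities)
    -- nonemptiness of B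
    have hBne : B.Nonempty := by
      rcases Nat.even_or_odd s₀ with hs | hs
      · -- even case
        have hs0 : s₀ % 2 = 0 := Nat.even_iff.mp hs
        obtain ⟨x, hxS, hxmin, hxev⟩ := hinv'.1 hs0
        have hxM : ∀ z ∈ S, ¬ Plt le z x := by
          intro z hzS hzx
          have h1 : r z ≤ r x := hr.1 z x hzx.1
          have h2 : r x ≤ r z := hxmin z hzS
          have := class_cover hP hr hup (ht x) rfl hxS hzS hzx (le_antisymm h1 h2)
          omega
        refine ⟨x, (hBmem x).mpr ⟨hxS, ⟨by omega, hxM⟩, ?_⟩⟩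
        intro y hyS _
        exact ⟨hxmin y hyS, by omega⟩
      · -- odd case
        have hs0 : s₀ % 2 = 1 := Nat.odd_iff.mp hs
        obtain ⟨x, hxS, hxmin⟩ := S.exists_min_image r hSne
        have hxodd : ht x % 2 = 1 := hinv'.2 hs0 x hxS hxmin
        have minclassMin : ∀ u ∈ S, (∀ y ∈ S, r u ≤ r y) → ∀ z ∈ S, ¬ Plt le z u := by
          intro u huS humin z hzS hzu
          have h1 : r z ≤ r u := hr.1 z u hzu.1
          have h2 : r u ≤ r z := humin z hzS
          have heq := le_antisymm h1 h2
          have hodd : ht z % 2 = 1 := by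
            refine hinv'.2 hs0 z hzS ?_
            intro y hyS
            exact le_trans h1 (humin y hyS)
          have := class_cover hP hr hup (ht u) rfl huS hzS hzu heq
          omega
        refine ⟨x, (hBmem x).mpr ⟨hxS, ⟨by omega, minclassMin x hxS hxmin⟩, ?_⟩⟩
        intro y hyS hyc
        refine ⟨hxmin y hyS, fun _ => ?_⟩
        rcases lt_or_ge (r x) (r y) with h | h
        · exact h
        · exfalso
          have heq : r x = r y := le_antisymm (hxmin y hyS) h
          have hymin : ∀ u ∈ S, r y ≤ r u := fun u huS => by
            rw [← heq]; exact hxmin u huS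
          exact hyc ⟨by have := hinv'.2 hs0 y hyS hymin; omega, minclassMin y hyS hymin⟩
    -- the rest
    set S' : Finset (Fin n) := S \ B with hS'def
    have hS'mem : ∀ x, x ∈ S' ↔ x ∈ S ∧ x ∉ B := by
      intro x; rw [hS'def, Finset.mem_sdiff]
    have hS'ss : S' ⊂ S := Finset.sdiff_ssubset hBsub hBne
    have hup' : ∀ x ∈ S', ∀ y, le x y → y ∈ S' := by
      intro x hx y hxy
      have hx' := (hS'mem x).mp hx
      have hyS : y ∈ S := hup x hx'.1 y hxy
      refine (hS'mem y).mpr ⟨hyS, fun hyB => ?_⟩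
      rcases eq_or_ne x y with rfl | hne
      · exact hx'.2 hyB
      · exact (((hBmem y).mp hyB).2.1).2 x hx'.1 ⟨hxy, hne⟩
    -- parity of elements of B
    have hBpar : ∀ x ∈ B, ht x % 2 = s₀ % 2 := fun x hx => (((hBmem x).mp hx).2.1).1
    -- cross condition: from B to S'
    have hcross : ∀ x ∈ B, ∀ y ∈ S', r x ≤ r y ∧ (s₀ % 2 = 1 → r x < r y) := by
      intro x hx y hy
      obtain ⟨hxS, hcx, hvx⟩ := (hBmem x).mp hx
      obtain ⟨hyS, hyB⟩ := (hS'mem y).mp hy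
      by_cases hcy : cand y
      · -- y is a candidate that failed the value condition
        have : ¬ (cand y ∧ ∀ y₂ ∈ S, ¬ cand y₂ → (r y ≤ r y₂ ∧ (s₀ % 2 = 1 → r y < r y₂))) := by
          intro hcon
          exact hyB ((hBmem y).mpr ⟨hyS, hcon⟩)
      -- extract a witness
        push_neg at this
        obtain ⟨y₂, hy₂S, hy₂c, hfail⟩ := this hcy
        have hx₂ := hvx y₂ hy₂S hy₂c
        rcases Nat.even_or_odd s₀ with hs | hs
        · have hs0 : s₀ % 2 = 0 := Nat.even_iff.mp hs
          have h2 : r y₂ < r y := by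
            by_contra hh
            have := (hfail (not_lt.mp hh)).1
            omega
          exact ⟨le_trans hx₂.1 (le_of_lt h2), by omega⟩
        · have hs0 : s₀ % 2 = 1 := Nat.odd_iff.mp hs
          have hxlt : r x < r y₂ := hx₂.2 hs0
          have hy2 : r y₂ ≤ r y := by
            by_cases hA : r y ≤ r y₂
            · exact (hfail hA).2
            · exact le_of_lt (lt_of_not_ge hA)
          have : r x < r y := lt_of_lt_of_le hxlt hy2
          exact ⟨le_of_lt this, fun _ => this⟩
      · exact hvx y hyS hcy
    -- invariant propagation
    have hinvNext : S'.Nonempty → Inv ht r S' (s₀ + 1) := by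
      intro hS'ne
      rcases Nat.even_or_odd s₀ with hs | hs
      · -- s₀ even: show every min-value element of S' has odd height
        have hs0 : s₀ % 2 = 0 := Nat.even_iff.mp hs
        constructor
        · intro h; omega
        · intro _ x hxS' hxmin'
          by_contra hxe
          have hxev : ht x % 2 = 0 := by omega
          obtain ⟨hxS, hxB⟩ := (hS'mem x).mp hxS'
          by_cases hxM : ∀ z ∈ S, ¬ Plt le z x
          · -- x was a candidate; it failed the value condition
            have : ¬ (cand x ∧ ∀ y ∈ S, ¬ cand y → (r x ≤ r y ∧ (s₀ % 2 = 1 → r x < r y))) :=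
              fun hcon => hxB ((hBmem x).mpr ⟨hxS, hcon⟩)
            push_neg at this
            obtain ⟨y, hyS, hyc, hfail⟩ := this ⟨by omega, hxM⟩
            have hylt : r y < r x := by
              by_contra hh
              have := (hfail (not_lt.mp hh)).1
              omega
            have hyS' : y ∈ S' := (hS'mem y).mpr ⟨hyS, fun hyB =>
              hyc (((hBmem y).mp hyB).2.1)⟩
            exact absurd (hxmin' y hyS') (not_le.mpr hylt)
          · push_neg at hxM
            obtain ⟨z, hzS, hzx⟩ := hxM
            obtain ⟨w, hzw, hwx, hcov⟩ := cover_above hP hzx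
            have hwS : w ∈ S := hup z hzS w hzw
            by_cases hwB : w ∈ B
            · have := hBpar w hwB
              omega
            · have hwS' : w ∈ S' := (hS'mem w).mpr ⟨hwS, hwB⟩
              have h1 : r w ≤ r x := hr.1 w x hwx.1
              have h2 : r x ≤ r w := hxmin' w hwS'
              have := class_cover hP hr hup' (ht x) rfl hxS' hwS' hwx (le_antisymm h1 h2)
              omega
      · -- s₀ odd: find a min-value element of S' with even height
        have hs0 : s₀ % 2 = 1 := Nat.odd_iff.mp hs
        constructor
        · intro _
          -- the min-value class of S'
          obtain ⟨m, hmS', hmmin⟩ := S'.exists_min_image r hS'ne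
          set C : Finset (Fin n) := S'.filter (fun u => ∀ y ∈ S', r u ≤ r y) with hCdef
          have hCne : C.Nonempty := ⟨m, by rw [hCdef, Finset.mem_filter]; exact ⟨hmS', hmmin⟩⟩
          obtain ⟨w₀, hw₀C, hw₀min⟩ := exists_plt_minimal hP C hCne
          rw [hCdef, Finset.mem_filter] at hw₀C
          obtain ⟨hw₀S', hw₀val⟩ := hw₀C
          by_cases hw₀e : ht w₀ % 2 = 0
          · exact ⟨w₀, hw₀S', hw₀val, hw₀e⟩
          · -- w₀ has odd height
            have claim1 : ∀ z ∈ S', ¬ Plt le z w₀ := by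
              intro z hz hzw
              have h1 : r z ≤ r w₀ := hr.1 z w₀ hzw.1
              have h2 : r w₀ ≤ r z := hw₀val z hz
              have hzC : z ∈ C := by
                rw [hCdef, Finset.mem_filter]
                exact ⟨hz, fun y hy => le_trans h1 (hw₀val y hy)⟩
              exact hw₀min z hzC hzw
            have claim2 : ∀ z ∈ S, ¬ Plt le z w₀ := by
              intro z hzS hzw
              obtain ⟨w, hzw', hww₀, hcov⟩ := cover_above hP hzw
              have hwS : w ∈ S := hup z hzS w hzw'
              by_cases hwB : w ∈ B
              · have := hBpar w hwB
                omega
              · exact claim1 w ((hS'mem w).mpr ⟨hwS, hwB⟩) hww₀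
            have hw₀S : w₀ ∈ S := ((hS'mem w₀).mp hw₀S').1
            have hw₀B : w₀ ∉ B := ((hS'mem w₀).mp hw₀S').2
            have : ¬ (cand w₀ ∧ ∀ y ∈ S, ¬ cand y →
                (r w₀ ≤ r y ∧ (s₀ % 2 = 1 → r w₀ < r y))) :=
              fun hcon => hw₀B ((hBmem w₀).mpr ⟨hw₀S, hcon⟩)
            push_neg at this
            obtain ⟨y, hyS, hyc, hfail⟩ := this ⟨by omega, claim2⟩
            have hy_le : r y ≤ r w₀ := by
              by_cases hA : r w₀ ≤ r y
              · exact (hfail hA).2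
              · exact le_of_not_ge hA
            have hyS' : y ∈ S' := (hS'mem y).mpr ⟨hyS, fun hyB =>
              hyc (((hBmem y).mp hyB).2.1)⟩
            have hymin : ∀ u ∈ S', r y ≤ r u :=
              fun u hu => le_trans hy_le (hw₀val u hu)
            by_cases hye : ht y % 2 = 0
            · exact ⟨y, hyS', hymin, hye⟩
            · have hnotmin : ¬ ∀ z ∈ S, ¬ Plt le z y := by
                intro hmin
                exact hyc ⟨by omega, hmin⟩
              push_neg at hnotmin
              obtain ⟨z, hzS, hzy⟩ := hnotmin
              obtain ⟨w, hzw', hwy, hcov⟩ := cover_above hP hzy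
              have hwS : w ∈ S := hup z hzS w hzw'
              have hwB : w ∉ B := by
                intro hwB
                have := hBpar w hwB
                omega
              have hwS' : w ∈ S' := (hS'mem w).mpr ⟨hwS, hwB⟩
              refine ⟨w, hwS', ?_, by omega⟩
              intro u hu
              exact le_trans (hr.1 w y hwy.1) (hymin u hu)
        · intro h; omega
    -- apply the induction hypothesis
    obtain ⟨ℓ', κ', hA', hC', hD', hSurj'⟩ := ih S' hS'ss (s₀ + 1) hup' hinvNext
    refine ⟨ℓ' + 1, fun x => if x ∈ B then s₀ else κ' x, ?_, ?_, ?_, ?_⟩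
    · intro x hxS
      by_cases hx : x ∈ B
      · simp only [hx, if_pos]
        exact ⟨le_refl _, by omega, by have := hBpar x hx; omega⟩
      · have hxS' : x ∈ S' := (hS'mem x).mpr ⟨hxS, hx⟩
        simp only [hx, if_neg, if_false]
        have := hA' x hxS'
        exact ⟨by omega, by omega, this.2.2⟩
    · intro x hxS y hyS hlt
      by_cases hx : x ∈ B <;> by_cases hy : y ∈ B
      · simp only [hx, hy, if_pos] at hlt; omega
      · simp only [hx, hy, if_pos, if_neg, if_false] at hlt ⊢
        have hyS' : y ∈ S' := (hS'mem y).mpr ⟨hyS, hy⟩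
        have h := hcross x hx y hyS'
        exact ⟨h.1, fun hp => h.2 (by omega)⟩
      · exfalso
        simp only [hx, hy, if_pos, if_neg, if_false] at hlt
        have hxS' : x ∈ S' := (hS'mem x).mpr ⟨hxS, hx⟩
        have := (hA' x hxS').1
        omega
      · simp only [hx, hy, if_neg, if_false] at hlt ⊢
        exact hC' x ((hS'mem x).mpr ⟨hxS, hx⟩) y ((hS'mem y).mpr ⟨hyS, hy⟩) hlt
    · intro x hxS y hyS hxy
      by_cases hx : x ∈ B <;> by_cases hy : y ∈ B
      · exfalso
        exact (((hBmem y).mp hy).2.1).2 x hxS hxy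
      · simp only [hx, hy, if_pos, if_neg, if_false]
        have := (hA' y ((hS'mem y).mpr ⟨hyS, hy⟩)).1
        omega
      · exfalso
        exact (((hBmem y).mp hy).2.1).2 x hxS hxy
      · simp only [hx, hy, if_neg, if_false]
        exact hD' x ((hS'mem x).mpr ⟨hxS, hx⟩) y ((hS'mem y).mpr ⟨hyS, hy⟩) hxy
    · intro t ht1 ht2
      rcases eq_or_lt_of_le ht1 with rfl | htlt
      · obtain ⟨x, hx⟩ := hBne
        exact ⟨x, hBsub hx, by simp [hx]⟩
      · obtain ⟨x, hxS', hxκ⟩ := hSurj' t htlt (by omega)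
        have hx : x ∉ B := ((hS'mem x).mp hxS').2
        exact ⟨x, ((hS'mem x).mp hxS').1, by simp [hx, hxκ]⟩

end Stmt17Aux

namespace Stmt17Aux

variable {n N : ℕ} {le : Fin n → Fin n → Prop} {ht : Fin n → ℕ}

/-- a "good" set composition for `P`: block index parities match heights, and the
block index is strictly increasing along strict relations of `P`. -/
def GoodK (le : Fin n → Fin n → Prop) (ht : Fin n → ℕ) (K : SetComp n) : Prop :=
  (∀ x, (K.1.2 x : ℕ) % 2 = ht x % 2) ∧
  ∀ x y, le x y → x ≠ y → (K.1.2 x : ℕ) < (K.1.2 y : ℕ)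

lemma compat_pair {K : SetComp n} {r : Fin n → Fin N}
    (hc : NCOrderCond K.le K.ht r) {x y : Fin n}
    (h : (K.1.2 x : ℕ) < (K.1.2 y : ℕ)) :
    r x ≤ r y ∧ ((K.1.2 x : ℕ) % 2 = 1 → r x < r y) := by
  have hle : K.le x y := Or.inr (Fin.lt_def.mpr h)
  constructor
  · exact hc.1 x y hle
  · intro hp
    refine hc.2 x y hle (fun e => by subst e; exact lt_irrefl _ h) ?_
    exact Nat.odd_iff.mpr hp

lemma good_imp {r : Fin n → Fin N} {K : SetComp n}
    (hg : GoodK le ht K) (hc : NCOrderCond K.le K.ht r) :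
    NCOrderCond le ht r := by
  constructor
  · intro x y hxy
    rcases eq_or_ne x y with rfl | hne
    · exact le_refl _
    · exact (compat_pair hc (hg.2 x y hxy hne)).1
  · intro x y hxy hne hodd
    refine (compat_pair hc (hg.2 x y hxy hne)).2 ?_
    rw [hg.1 x]
    exact Nat.odd_iff.mp hodd

lemma good_unique {r : Fin n → Fin N} {K K' : SetComp n}
    (hg : GoodK le ht K) (hg' : GoodK le ht K')
    (hc : NCOrderCond K.le K.ht r) (hc' : NCOrderCond K'.le K'.ht r) : K = K' := by
  have key : ∀ s : ℕ, ∀ x, ((K.1.2 x : ℕ) = s ↔ (K'.1.2 x : ℕ) = s) := by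
    intro s
    induction s using Nat.strong_induction_on with
    | _ s ihs =>
      have aux : ∀ (L L' : SetComp n), GoodK le ht L → GoodK le ht L' →
          NCOrderCond L.le L.ht r → NCOrderCond L'.le L'.ht r →
          (∀ t, t < s → ∀ x, ((L.1.2 x : ℕ) = t ↔ (L'.1.2 x : ℕ) = t)) →
          ∀ x, (L.1.2 x : ℕ) = s → (L'.1.2 x : ℕ) = s := by
        intro L L' hgL hgL' hcL hcL' IH x hx
        by_contra hne
        have h1 : ¬ (L'.1.2 x : ℕ) < s := fun h => by
          have := (IH _ h x).mpr rfl
          omega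
        have hpar : (L'.1.2 x : ℕ) % 2 = (L.1.2 x : ℕ) % 2 := by
          rw [hgL'.1 x, hgL.1 x]
        have h2 : s + 2 ≤ (L'.1.2 x : ℕ) := by omega
        have hlt : (s + 1 : ℕ) < (L'.1.1 : ℕ) := by
          have := (L'.1.2 x).isLt
          omega
        obtain ⟨z, hz⟩ := L'.2 ⟨s + 1, hlt⟩
        have hz' : (L'.1.2 z : ℕ) = s + 1 := by rw [hz]
        have hz1 : ¬ (L.1.2 z : ℕ) < s := fun h => by
          have := (IH _ h z).mp rfl
          omega
        have hzpar : (L.1.2 z : ℕ) % 2 = (s + 1) % 2 := by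
          rw [hgL.1 z, ← hgL'.1 z, hz']
        have hz2 : s < (L.1.2 z : ℕ) := by omega
        have cL := compat_pair hcL (show (L.1.2 x : ℕ) < (L.1.2 z : ℕ) by omega)
        have cL' := compat_pair hcL' (show (L'.1.2 z : ℕ) < (L'.1.2 x : ℕ) by omega)
        rcases Nat.even_or_odd s with hs | hs
        · have hsev : s % 2 = 0 := Nat.even_iff.mp hs
          have hr1 : r z < r x := cL'.2 (by omega)
          have hr2 : r x ≤ r z := cL.1
          exact absurd hr2 (not_le.mpr hr1)
        · have hsod : s % 2 = 1 := Nat.odd_iff.mp hs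
          have hr1 : r x < r z := cL.2 (by omega)
          have hr2 : r z ≤ r x := cL'.1
          exact absurd hr2 (not_le.mpr hr1)
      intro x
      exact ⟨aux K K' hg hg' hc hc' (fun t htl => ihs t htl) x,
             aux K' K hg' hg hc' hc (fun t htl x' => (ihs t htl x').symm) x⟩
  have hκ : ∀ x, (K.1.2 x : ℕ) = (K'.1.2 x : ℕ) := fun x => ((key _ x).mp rfl).symm
  have hlen : K.1.1 = K'.1.1 := by
    apply Fin.ext
    by_contra hne
    rcases Nat.lt_or_ge (K.1.1 : ℕ) (K'.1.1 : ℕ) with h | h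
    · obtain ⟨x, hx⟩ := K'.2 ⟨(K.1.1 : ℕ), h⟩
      have h1 : (K'.1.2 x : ℕ) = (K.1.1 : ℕ) := by rw [hx]
      have h2 := (K.1.2 x).isLt
      rw [← hκ x] at h1
      omega
    · have h' : (K'.1.1 : ℕ) < (K.1.1 : ℕ) := by omega
      obtain ⟨x, hx⟩ := K.2 ⟨(K'.1.1 : ℕ), h'⟩
      have h1 : (K.1.2 x : ℕ) = (K'.1.1 : ℕ) := by rw [hx]
      have h2 := (K'.1.2 x).isLt
      rw [hκ x] at h1
      omega
  obtain ⟨⟨ℓ, f⟩, hf⟩ := K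
  obtain ⟨⟨ℓ', f'⟩, hf'⟩ := K'
  simp only at hκ hlen
  subst hlen
  apply Subtype.ext
  simp only
  exact Sigma.ext rfl (heq_of_eq (funext fun x => Fin.ext (hκ x)))

lemma exists_good (hP : IsLRPoset le ht) {r : Fin n → Fin N}
    (hr : NCOrderCond le ht r) :
    ∃ K : SetComp n, GoodK le ht K ∧ NCOrderCond K.le K.ht r := by
  have hup : ∀ x ∈ (Finset.univ : Finset (Fin n)), ∀ y, le x y → y ∈ Finset.univ := by
    simp
  have hinv : (Finset.univ : Finset (Fin n)).Nonempty → Inv ht r Finset.univ 0 := by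
    intro hne
    constructor
    · intro _
      set C : Finset (Fin n) := Finset.univ.filter (fun u => ∀ y, r u ≤ r y) with hC
      have hCne : C.Nonempty := by
        obtain ⟨m, -, hm⟩ := Finset.univ.exists_min_image r hne
        refine ⟨m, ?_⟩
        simp only [hC, Finset.mem_filter, Finset.mem_univ, true_and]
        exact fun y => hm y (Finset.mem_univ y)
      obtain ⟨w, hwC, hwmin⟩ := exists_plt_minimal hP C hCne
      simp only [hC, Finset.mem_filter, Finset.mem_univ, true_and] at hwC
      have hw0 : ht w = 0 := by
        refine hP.2.2.2.1 w ?_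
        intro y hyw
        by_contra hne'
        refine hwmin y ?_ ⟨hyw, hne'⟩
        simp only [hC, Finset.mem_filter, Finset.mem_univ, true_and]
        intro u
        exact le_trans (hr.1 y w hyw) (hwC u)
      exact ⟨w, Finset.mem_univ w, fun y _ => hwC y, by omega⟩
    · intro h
      exact absurd h (by omega)
  obtain ⟨ℓ, κ, hA, hC, hD, hSurj⟩ := greedy hP hr Finset.univ 0 hup hinv
  have hch : ∀ t : Fin ℓ, ∃ x : Fin n, κ x = t := by
    intro t
    obtain ⟨x, -, hx⟩ := hSurj t (Nat.zero_le _) (by have := t.isLt; omega)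
    exact ⟨x, hx⟩
  choose g hg using hch
  have hinj : Function.Injective g := by
    intro a b hab
    apply Fin.ext
    rw [← hg a, ← hg b, hab]
  have hℓn : ℓ ≤ n := by simpa using Fintype.card_le_of_injective g hinj
  have hbound : ∀ x : Fin n, κ x < ℓ := fun x => by
    have := (hA x (Finset.mem_univ x)).2.1
    omega
  refine ⟨⟨⟨⟨ℓ, by omega⟩, fun x => ⟨κ x, hbound x⟩⟩, ?_⟩, ⟨?_, ?_⟩, ?_, ?_⟩
  · intro v
    obtain ⟨x, -, hx⟩ := hSurj v.val (Nat.zero_le _)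
      (by have hv : (v : ℕ) < ℓ := v.isLt; omega)
    exact ⟨x, Fin.ext (by simpa using hx)⟩
  · intro x
    exact (hA x (Finset.mem_univ x)).2.2
  · intro x y hxy hne
    exact hD x (Finset.mem_univ x) y (Finset.mem_univ y) ⟨hxy, hne⟩
  · intro x y hxy
    rcases hxy with rfl | hlt
    · exact le_refl _
    · exact (hC x (Finset.mem_univ x) y (Finset.mem_univ y) hlt).1
  · intro x y hxy hne hodd
    rcases hxy with rfl | hlt
    · exact absurd rfl hne
    · exact (hC x (Finset.mem_univ x) y (Finset.mem_univ y) hlt).2 (Nat.odd_iff.mp hodd)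

lemma count_eq (hP : IsLRPoset le ht) (N : ℕ) (r : Fin n → Fin N) :
    (if NCOrderCond le ht r then (1 : ℚ) else 0) =
      ∑ K : SetComp n, (if GoodK le ht K then (1 : ℚ) else 0) *
        (if NCOrderCond K.le K.ht r then 1 else 0) := by
  have hrw : ∀ K : SetComp n, (if GoodK le ht K then (1 : ℚ) else 0) *
      (if NCOrderCond K.le K.ht r then 1 else 0) =
      (if GoodK le ht K ∧ NCOrderCond K.le K.ht r then (1 : ℚ) else 0) := by
    intro K
    by_cases h1 : GoodK le ht K <;> by_cases h2 : NCOrderCond K.le K.ht r <;>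
      simp [h1, h2]
  rw [Finset.sum_congr rfl (fun K _ => hrw K), Finset.sum_boole]
  by_cases hoc : NCOrderCond le ht r
  · rw [if_pos hoc]
    obtain ⟨K₀, hg₀, hc₀⟩ := exists_good hP hoc
    have hfil : Finset.univ.filter
        (fun K : SetComp n => GoodK le ht K ∧ NCOrderCond K.le K.ht r) = {K₀} := by
      ext K
      simp only [Finset.mem_filter, Finset.mem_univ, true_and, Finset.mem_singleton]
      constructor
      · rintro ⟨hg, hcK⟩
        exact good_unique hg hg₀ hcK hc₀
      · rintro rfl
        exact ⟨hg₀, hc₀⟩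
    rw [hfil]
    simp
  · rw [if_neg hoc]
    have hfil : Finset.univ.filter
        (fun K : SetComp n => GoodK le ht K ∧ NCOrderCond K.le K.ht r) = ∅ := by
      ext K
      simp only [Finset.mem_filter, Finset.mem_univ, true_and, Finset.notMem_empty,
        iff_false, not_and]
      intro hg hcK
      exact hoc (good_imp hg hcK)
    rw [hfil]
    simp

end Stmt17Aux

/-- For any labeled ranked poset `P` on `n` elements, `𝐅_P` is a linear
combination with nonnegative integer coefficients of the `𝐅_{P_K}`, `K` ranging over the
set compositions of `{1,…,n}`. -/
theorem stmt17 (n : ℕ) (le : Fin n → Fin n → Prop) (ht : Fin n → ℕ)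
    (hP : IsLRPoset le ht) :
    ∃ c : SetComp n → ℕ, ∀ N : ℕ, 1 ≤ N →
      ncF le ht N = ∑ K : SetComp n, (c K : ℚ) • ncF K.le K.ht N := by
  refine ⟨fun K => if Stmt17Aux.GoodK le ht K then 1 else 0, ?_⟩
  intro N _
  have step1 : ∀ K : SetComp n,
      ((if Stmt17Aux.GoodK le ht K then (1 : ℕ) else 0 : ℕ) : ℚ) • ncF K.le K.ht N =
      ∑ r : Fin n → Fin N,
        ((if Stmt17Aux.GoodK le ht K then (1 : ℚ) else 0) *
          (if NCOrderCond K.le K.ht r then 1 else 0)) •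
          (MonoidAlgebra.of ℚ (FreeMonoid ℕ)
            (FreeMonoid.ofList (List.ofFn fun i => (r i : ℕ)))) := by
    intro K
    unfold ncF
    rw [Finset.smul_sum]
    refine Finset.sum_congr rfl (fun r _ => ?_)
    by_cases h1 : Stmt17Aux.GoodK le ht K <;> by_cases h2 : NCOrderCond K.le K.ht r <;>
      simp [h1, h2]
  rw [Finset.sum_congr rfl (fun K _ => step1 K), Finset.sum_comm]
  unfold ncF
  refine Finset.sum_congr rfl (fun r _ => ?_)
  rw [← Finset.sum_smul, ← Stmt17Aux.count_eq hP N r]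
  by_cases hoc : NCOrderCond le ht r <;> simp [hoc]
end
end

section
/- Let K be a set composition of {1,…,n} and K′ a set composition of {1,…,n′}. There exists a family (c_{K″}) of nonnegative integers indexed by the set compositions K″ of {1,…,n+n′} such that 𝐅_{P_K}^(N) · 𝐅_{P_{K′}}^(N) = Σ_{K″} c_{K″} 𝐅_{P_{K″}}^(N) in the free ℚ-algebra on a₁,…,a_N, for every N ≥ 1. (The multiplication table of the basis 𝐅_{P_K} has nonnegative integer entries.) -/
open scoped Classical

noncomputable section

section Part0

variable {n n' N : ℕ}

/-- Combine `r : Fin n → Fin N` and `r' : Fin n' → Fin N` into one function. -/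
def combineR (r : Fin n → Fin N) (r' : Fin n' → Fin N) (x : Fin (n + n')) : Fin N :=
  if h : (x : ℕ) < n then r ⟨x, h⟩ else r' ⟨(x : ℕ) - n, by have := x.isLt; omega⟩

def combineEquiv (n n' N : ℕ) : ((Fin n → Fin N) × (Fin n' → Fin N)) ≃ (Fin (n + n') → Fin N) where
  toFun p := combineR p.1 p.2
  invFun R := (fun i => R (Fin.castAdd n' i), fun j => R (Fin.natAdd n j))
  left_inv p := by
    ext i
    · simp [combineR, Fin.castAdd, Fin.castLE]
    · simp only [combineR, Fin.natAdd]
      rw [dif_neg (by simp)]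
      congr 1
      ext
      simp
  right_inv R := by
    funext x
    simp only [combineR]
    split_ifs with h
    · congr 1
    · congr 1
      ext
      simp only [Fin.natAdd]
      omega

lemma combineR_castAdd (r : Fin n → Fin N) (r' : Fin n' → Fin N) (i : Fin n) :
    combineR r r' (Fin.castAdd n' i) = r i := by
  simp [combineR, Fin.castAdd, Fin.castLE]

lemma combineR_natAdd (r : Fin n → Fin N) (r' : Fin n' → Fin N) (j : Fin n') :
    combineR r r' (Fin.natAdd n j) = r' j := by
  simp only [combineR, Fin.natAdd]
  rw [dif_neg (by simp)]
  congr 1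
  ext
  simp

end Part0

section Part0b

variable {n n' N : ℕ} (K : SetComp n) (K' : SetComp n')

lemma cond_combine_iff (r : Fin n → Fin N) (r' : Fin n' → Fin N) :
    NCOrderCond (sumLe K.le K'.le) (sumHt K.ht K'.ht) (combineR r r') ↔
      NCOrderCond K.le K.ht r ∧ NCOrderCond K'.le K'.ht r' := by
  constructor
  · rintro ⟨h1, h2⟩
    refine ⟨⟨fun x y hxy => ?_, fun x y hxy hne ho => ?_⟩,
      ⟨fun x y hxy => ?_, fun x y hxy hne ho => ?_⟩⟩
    · have := h1 (Fin.castAdd n' x) (Fin.castAdd n' y)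
        (Or.inl ⟨by simpa using x.isLt, by simpa using y.isLt, by simpa using hxy⟩)
      simpa [combineR_castAdd] using this
    · have := h2 (Fin.castAdd n' x) (Fin.castAdd n' y)
        (Or.inl ⟨by simpa using x.isLt, by simpa using y.isLt, by simpa using hxy⟩)
        (by simpa [Fin.ext_iff] using hne)
        (by simpa [sumHt, SetComp.ht] using ho)
      simpa [combineR_castAdd] using this
    · have := h1 (Fin.natAdd n x) (Fin.natAdd n y)
        (Or.inr ⟨by simp, by simp, by simpa using hxy⟩)
      simpa [combineR_natAdd] using this
    · have hox : Odd (sumHt K.ht K'.ht (Fin.natAdd n x)) := by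
        have : ¬ ((Fin.natAdd n x : ℕ) < n) := by simp
        simpa [sumHt, this, SetComp.ht] using ho
      have := h2 (Fin.natAdd n x) (Fin.natAdd n y)
        (Or.inr ⟨by simp, by simp, by simpa using hxy⟩)
        (by simpa [Fin.ext_iff] using hne) hox
      simpa [combineR_natAdd] using this
  · rintro ⟨⟨h1, h2⟩, h3, h4⟩
    constructor
    · rintro x y (⟨hx, hy, hxy⟩ | ⟨hx, hy, hxy⟩)
      · have := h1 _ _ hxy
        simpa [combineR, dif_pos hx, dif_pos hy] using this
      · have := h3 _ _ hxy
        simpa [combineR, dif_neg (by omega : ¬ (x:ℕ) < n), dif_neg (by omega : ¬ (y:ℕ) < n)]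
          using this
    · rintro x y (⟨hx, hy, hxy⟩ | ⟨hx, hy, hxy⟩) hne ho
      · have ho' : Odd (K.ht ⟨x, hx⟩) := by simpa [sumHt, dif_pos hx] using ho
        have hne' : (⟨x, hx⟩ : Fin n) ≠ ⟨y, hy⟩ := by
          simp only [ne_eq, Fin.ext_iff] at hne ⊢; omega
        have := h2 _ _ hxy hne' ho'
        simpa [combineR, dif_pos hx, dif_pos hy] using this
      · have ho' : Odd (K'.ht ⟨(x:ℕ) - n, by have := x.isLt; omega⟩) := by
          simpa [sumHt, dif_neg (by omega : ¬ (x:ℕ) < n)] using ho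
        have hne' : (⟨(x:ℕ) - n, by have := x.isLt; omega⟩ : Fin n') ≠
            ⟨(y:ℕ) - n, by have := y.isLt; omega⟩ := by
          simp only [ne_eq, Fin.ext_iff] at hne ⊢; omega
        have := h4 _ _ hxy hne' ho'
        simpa [combineR, dif_neg (by omega : ¬ (x:ℕ) < n), dif_neg (by omega : ¬ (y:ℕ) < n)]
          using this

lemma word_combine (r : Fin n → Fin N) (r' : Fin n' → Fin N) :
    (FreeMonoid.ofList (List.ofFn fun i => ((combineR r r' i : Fin N) : ℕ)) : FreeMonoid ℕ) =
      FreeMonoid.ofList (List.ofFn fun i => ((r i : Fin N) : ℕ)) *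
        FreeMonoid.ofList (List.ofFn fun i => ((r' i : Fin N) : ℕ)) := by
  have : (List.ofFn fun i : Fin (n + n') => ((combineR r r' i : Fin N) : ℕ)) =
      (List.ofFn fun i : Fin n => ((r i : Fin N) : ℕ)) ++
        (List.ofFn fun i : Fin n' => ((r' i : Fin N) : ℕ)) := by
    rw [List.ofFn_add]
    simp [combineR_castAdd, combineR_natAdd]
    funext i; exact congrArg Fin.val (combineR_castAdd r r' i)
  rw [this]
  rfl

lemma ncF_mul :
    ncF K.le K.ht N * ncF K'.le K'.ht N = ncF (sumLe K.le K'.le) (sumHt K.ht K'.ht) N := by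
  rw [ncF, ncF, Finset.sum_mul_sum, ncF]
  rw [← Fintype.sum_prod_type (f := fun p : (Fin n → Fin N) × (Fin n' → Fin N) =>
    (if NCOrderCond K.le K.ht p.1 then
      MonoidAlgebra.of ℚ (FreeMonoid ℕ) (FreeMonoid.ofList (List.ofFn fun i => (p.1 i : ℕ)))
    else 0) *
    (if NCOrderCond K'.le K'.ht p.2 then
      MonoidAlgebra.of ℚ (FreeMonoid ℕ) (FreeMonoid.ofList (List.ofFn fun i => (p.2 i : ℕ)))
    else 0))]
  rw [← (combineEquiv n n' N).sum_comp
    (fun R => if NCOrderCond (sumLe K.le K'.le) (sumHt K.ht K'.ht) R then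
      MonoidAlgebra.of ℚ (FreeMonoid ℕ) (FreeMonoid.ofList (List.ofFn fun i => (R i : ℕ)))
    else 0)]
  apply Finset.sum_congr rfl
  rintro ⟨r, r'⟩ -
  rw [show (combineEquiv n n' N) (r, r') = combineR r r' from rfl]
  by_cases h1 : NCOrderCond K.le K.ht r <;> by_cases h2 : NCOrderCond K'.le K'.ht r'
  · rw [if_pos h1, if_pos h2, ite_cond_eq_true _ _ (eq_true ((cond_combine_iff K K' r r').mpr ⟨h1, h2⟩)),
      word_combine, map_mul]
  · rw [if_pos h1, if_neg h2, mul_zero,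
      ite_cond_eq_false _ _ (eq_false (fun hh => h2 ((cond_combine_iff K K' r r').mp hh).2))]
  · rw [if_neg h1, zero_mul,
      ite_cond_eq_false _ _ (eq_false (fun hh => h1 ((cond_combine_iff K K' r r').mp hh).1))]
  · rw [if_neg h1, zero_mul,
      ite_cond_eq_false _ _ (eq_false (fun hh => h1 ((cond_combine_iff K K' r r').mp hh).1))]

end Part0b

section Part1

/-- General characterization of the order condition via the statistic `2 r + parity`. -/
lemma orderCond_char {n N : ℕ} (lt : Fin n → Fin n → Prop) (ht : Fin n → ℕ)
    (h2 : ∀ x y, lt x y → ht x < ht y)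
    (h3 : ∀ x y, lt x y → ht x % 2 = 0 → ht y % 2 = 0 →
      ∃ z, lt x z ∧ lt z y ∧ ht z % 2 = 1)
    (r : Fin n → Fin N) :
    NCOrderCond (fun x y => x = y ∨ lt x y) ht r ↔
      ∀ x y, lt x y → 2 * (r x : ℕ) + ht x % 2 < 2 * (r y : ℕ) + ht y % 2 := by
  constructor
  · rintro ⟨ha, hb⟩ x y hxy
    have hne : x ≠ y := by
      intro he; have hh := h2 x y hxy; rw [he] at hh; exact lt_irrefl _ hh
    have hle : (r x : ℕ) ≤ r y := Fin.le_def.mp (ha x y (Or.inr hxy))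
    rcases Nat.even_or_odd (ht x) with he | ho
    · have hex := Nat.even_iff.mp he
      rcases Nat.even_or_odd (ht y) with he' | ho'
      · have hey := Nat.even_iff.mp he'
        obtain ⟨z, hxz, hzy, hz⟩ := h3 x y hxy hex hey
        have hzy' : z ≠ y := by
          intro he; have hh := h2 z y hzy; rw [he] at hh; exact lt_irrefl _ hh
        have h1 : (r x : ℕ) ≤ r z := Fin.le_def.mp (ha x z (Or.inr hxz))
        have h2' : (r z : ℕ) < r y :=
          Fin.lt_def.mp (hb z y (Or.inr hzy) hzy' (Nat.odd_iff.mpr hz))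
        omega
      · have := Nat.odd_iff.mp ho'
        omega
    · have hox := Nat.odd_iff.mp ho
      have hlt : (r x : ℕ) < r y := Fin.lt_def.mp (hb x y (Or.inr hxy) hne ho)
      have : ht y % 2 < 2 := Nat.mod_lt _ two_pos
      omega
  · intro h
    constructor
    · rintro x y (rfl | hxy)
      · exact le_refl _
      · have := h x y hxy
        have : ht x % 2 < 2 := Nat.mod_lt _ two_pos
        have : ht y % 2 < 2 := Nat.mod_lt _ two_pos
        rw [Fin.le_def]; omega
    · rintro x y (rfl | hxy) hne ho
      · exact absurd rfl hne
      · have := h x y hxy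
        have := Nat.odd_iff.mp ho
        have : ht y % 2 < 2 := Nat.mod_lt _ two_pos
        rw [Fin.lt_def]; omega

/-- Characterization for set compositions. -/
lemma setComp_char {n N : ℕ} (K : SetComp n) (p : Fin n → ℕ)
    (hp : ∀ x, (K.1.2 x : ℕ) % 2 = p x % 2) (r : Fin n → Fin N) :
    NCOrderCond K.le K.ht r ↔
      ∀ x y, K.1.2 x < K.1.2 y →
        2 * (r x : ℕ) + p x % 2 < 2 * (r y : ℕ) + p y % 2 := by
  have := orderCond_char (fun x y => K.1.2 x < K.1.2 y) K.ht
    (fun x y hxy => Fin.lt_def.mp hxy)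
    (fun x y hxy hex hey => by
      simp only [SetComp.ht] at hex hey
      have hyl : ((K.1.2 y : ℕ)) < (K.1.1 : ℕ) := (K.1.2 y).isLt
      have hxy' : (K.1.2 x : ℕ) < (K.1.2 y : ℕ) := Fin.lt_def.mp hxy
      have hlt : (K.1.2 x : ℕ) + 1 < (K.1.1 : ℕ) := by omega
      obtain ⟨z, hz⟩ := K.2 ⟨(K.1.2 x : ℕ) + 1, hlt⟩
      have hzv : (K.1.2 z : ℕ) = (K.1.2 x : ℕ) + 1 := by rw [hz]
      refine ⟨z, ?_, ?_, ?_⟩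
      · show K.1.2 x < K.1.2 z
        rw [Fin.lt_def, hzv]; omega
      · show K.1.2 z < K.1.2 y
        rw [Fin.lt_def, hzv]; omega
      · show K.ht z % 2 = 1
        simp only [SetComp.ht, hzv]
        omega) r
  rw [show K.le = fun x y => x = y ∨ K.1.2 x < K.1.2 y from rfl]
  rw [this]
  constructor <;> intro h x y hxy <;> have h5 := h x y hxy <;>
    have e1 := hp x <;> have e2 := hp y <;>
    simp only [SetComp.ht] at h5 ⊢ <;> omega

end Part1

section Part1b

variable {n n' : ℕ}

/-- The strict order of the disjoint union of `P_K` and `P_{K'}`. -/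
def QLt (K : SetComp n) (K' : SetComp n') (x y : Fin (n + n')) : Prop :=
  (∃ (hx : (x : ℕ) < n) (hy : (y : ℕ) < n), K.1.2 ⟨x, hx⟩ < K.1.2 ⟨y, hy⟩) ∨
  (∃ (_ : n ≤ (x : ℕ)) (_ : n ≤ (y : ℕ)),
    K'.1.2 ⟨(x : ℕ) - n, by have := x.isLt; omega⟩ <
      K'.1.2 ⟨(y : ℕ) - n, by have := y.isLt; omega⟩)

lemma sumLe_iff_qlt (K : SetComp n) (K' : SetComp n') (x y : Fin (n + n')) :
    sumLe K.le K'.le x y ↔ x = y ∨ QLt K K' x y := by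
  constructor
  · rintro (⟨hx, hy, h⟩ | ⟨hx, hy, h⟩)
    · rcases h with h | h
      · left; rw [Fin.ext_iff] at h ⊢; simpa using h
      · right; exact Or.inl ⟨hx, hy, h⟩
    · rcases h with h | h
      · left; rw [Fin.ext_iff] at h ⊢; simp only at h; omega
      · right; exact Or.inr ⟨hx, hy, h⟩
  · rintro (rfl | h)
    · rcases Nat.lt_or_ge (x : ℕ) n with hx | hx
      · exact Or.inl ⟨hx, hx, Or.inl rfl⟩
      · exact Or.inr ⟨hx, hx, Or.inl rfl⟩
    · rcases h with ⟨hx, hy, h⟩ | ⟨hx, hy, h⟩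
      · exact Or.inl ⟨hx, hy, Or.inr h⟩
      · exact Or.inr ⟨hx, hy, Or.inr h⟩

lemma sumHt_left (K : SetComp n) (htQ : Fin n' → ℕ) (x : Fin (n + n')) (hx : (x : ℕ) < n) :
    sumHt K.ht htQ x = (K.1.2 ⟨x, hx⟩ : ℕ) := by
  simp [sumHt, dif_pos hx, SetComp.ht]

lemma sumHt_right (htP : Fin n → ℕ) (K' : SetComp n') (x : Fin (n + n')) (hx : n ≤ (x : ℕ)) :
    sumHt htP K'.ht x = (K'.1.2 ⟨(x : ℕ) - n, by have := x.isLt; omega⟩ : ℕ) := by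
  simp [sumHt, dif_neg (by omega : ¬ (x : ℕ) < n), SetComp.ht]

lemma qlt_ht (K : SetComp n) (K' : SetComp n') {x y : Fin (n + n')} (h : QLt K K' x y) :
    sumHt K.ht K'.ht x < sumHt K.ht K'.ht y := by
  rcases h with ⟨hx, hy, h⟩ | ⟨hx, hy, h⟩
  · rw [sumHt_left K K'.ht x hx, sumHt_left K K'.ht y hy]; exact Fin.lt_def.mp h
  · rw [sumHt_right K.ht K' x hx, sumHt_right K.ht K' y hy]; exact Fin.lt_def.mp h

set_option maxHeartbeats 2000000 in
lemma qlt_mid (K : SetComp n) (K' : SetComp n') {x y : Fin (n + n')} (h : QLt K K' x y)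
    (hex : sumHt K.ht K'.ht x % 2 = 0) (hey : sumHt K.ht K'.ht y % 2 = 0) :
    ∃ z, QLt K K' x z ∧ QLt K K' z y ∧ sumHt K.ht K'.ht z % 2 = 1 := by
  rcases h with ⟨hx, hy, h⟩ | ⟨hx, hy, h⟩
  · rw [sumHt_left K K'.ht x hx] at hex
    rw [sumHt_left K K'.ht y hy] at hey
    have hxy' := Fin.lt_def.mp h
    have hyl := (K.1.2 ⟨y, hy⟩).isLt
    have hlt : (K.1.2 ⟨x, hx⟩ : ℕ) + 1 < (K.1.1 : ℕ) := by omega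
    obtain ⟨z₀, hz⟩ := K.2 ⟨_, hlt⟩
    have hzv := congrArg Fin.val hz
    simp only [Fin.val_mk] at hzv
    refine ⟨⟨(z₀ : ℕ), by omega⟩, Or.inl ⟨hx, by simpa using z₀.isLt, ?_⟩,
      Or.inl ⟨by simpa using z₀.isLt, hy, ?_⟩, ?_⟩
    · rw [Fin.lt_def]; simp only [Fin.eta]; omega
    · rw [Fin.lt_def]; simp only [Fin.eta]; omega
    · rw [sumHt_left K K'.ht _ (by simpa using z₀.isLt)]
      simp only [Fin.eta]; omega
  · rw [sumHt_right K.ht K' x hx] at hex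
    rw [sumHt_right K.ht K' y hy] at hey
    have hxy' := Fin.lt_def.mp h
    have hyl := (K'.1.2 ⟨(y : ℕ) - n, by have := y.isLt; omega⟩).isLt
    have hlt : (K'.1.2 ⟨(x : ℕ) - n, by have := x.isLt; omega⟩ : ℕ) + 1 < (K'.1.1 : ℕ) := by
      omega
    obtain ⟨z₀, hz⟩ := K'.2 ⟨_, hlt⟩
    have hzv := congrArg Fin.val hz
    simp only [Fin.val_mk] at hzv
    refine ⟨⟨n + (z₀ : ℕ), by have := z₀.isLt; omega⟩,
      Or.inr ⟨hx, by simp only [Fin.val_mk]; omega, ?_⟩,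
      Or.inr ⟨by simp only [Fin.val_mk]; omega, hy, ?_⟩, ?_⟩
    · rw [Fin.lt_def]
      simp only [Fin.val_mk, Nat.add_sub_cancel_left, Fin.eta]; omega
    · rw [Fin.lt_def]
      simp only [Fin.val_mk, Nat.add_sub_cancel_left, Fin.eta]; omega
    · rw [sumHt_right K.ht K' _ (by simp only [Fin.val_mk]; omega)]
      simp only [Fin.val_mk, Nat.add_sub_cancel_left, Fin.eta]; omega

/-- The statistic `g`. -/
def gstat (K : SetComp n) (K' : SetComp n') {N : ℕ} (r : Fin (n + n') → Fin N)
    (x : Fin (n + n')) : ℕ :=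
  2 * (r x : ℕ) + sumHt K.ht K'.ht x % 2

lemma adm_Q_char (K : SetComp n) (K' : SetComp n') {N : ℕ} (r : Fin (n + n') → Fin N) :
    NCOrderCond (sumLe K.le K'.le) (sumHt K.ht K'.ht) r ↔
      ∀ x y, QLt K K' x y → gstat K K' r x < gstat K K' r y := by
  have hle : sumLe K.le K'.le = fun x y => x = y ∨ QLt K K' x y := by
    funext x y; exact propext (sumLe_iff_qlt K K' x y)
  rw [hle]
  exact orderCond_char _ _ (fun x y h => qlt_ht K K' h) (fun x y h hx hy => qlt_mid K K' h hx hy) r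

end Part1b

section Part2

/-- `w` has a predecessor of opposite parity in `S`. -/
def chg (S : Finset ℕ) (w : ℕ) : Prop :=
  ∃ p ∈ S, p < w ∧ (∀ u ∈ S, u < w → u ≤ p) ∧ (p + w) % 2 = 1

/-- The block index of the value `v`: number of parity changes in `S` up to `v`. -/
def beta (S : Finset ℕ) (v : ℕ) : ℕ := (S.filter fun w => w ≤ v ∧ chg S w).card

lemma beta_mono (S : Finset ℕ) {v v' : ℕ} (h : v ≤ v') : beta S v ≤ beta S v' := by
  apply Finset.card_le_card
  intro w hw
  simp only [Finset.mem_filter] at hw ⊢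
  exact ⟨hw.1, hw.2.1.trans h, hw.2.2⟩

lemma beta_min (S : Finset ℕ) {v : ℕ} (hmin : ∀ u ∈ S, v ≤ u) : beta S v = 0 := by
  rw [beta, Finset.card_eq_zero]
  ext w
  simp only [Finset.mem_filter, Finset.notMem_empty, iff_false, not_and]
  rintro hwS hwv ⟨p, hpS, hpw, -, -⟩
  have := hmin p hpS
  omega

lemma beta_step (S : Finset ℕ) {v p : ℕ} (hv : v ∈ S) (hp : p ∈ S) (hpv : p < v)
    (hpred : ∀ u ∈ S, u < v → u ≤ p) : beta S v = beta S p + (p + v) % 2 := by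
  have hsplit : S.filter (fun w => w ≤ v ∧ chg S w) =
      (S.filter fun w => w ≤ p ∧ chg S w) ∪ (S.filter fun w => w = v ∧ chg S w) := by
    ext w
    simp only [Finset.mem_filter, Finset.mem_union]
    constructor
    · rintro ⟨hwS, hwv, hc⟩
      rcases eq_or_lt_of_le hwv with rfl | hlt
      · exact Or.inr ⟨hwS, rfl, hc⟩
      · exact Or.inl ⟨hwS, hpred w hwS hlt, hc⟩
    · rintro (⟨hwS, hwp, hc⟩ | ⟨hwS, rfl, hc⟩)
      · exact ⟨hwS, by omega, hc⟩
      · exact ⟨hwS, le_refl _, hc⟩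
  have hdisj : Disjoint (S.filter fun w => w ≤ p ∧ chg S w)
      (S.filter fun w => w = v ∧ chg S w) := by
    rw [Finset.disjoint_left]
    intro w hw1 hw2
    simp only [Finset.mem_filter] at hw1 hw2
    omega
  rw [beta, hsplit, Finset.card_union_of_disjoint hdisj]
  congr 1
  by_cases hc : chg S v
  · have h1 : (p + v) % 2 = 1 := by
      obtain ⟨p', hp'S, hp'v, hp'pred, hpar⟩ := hc
      have h1 : p' ≤ p := hpred p' hp'S hp'v
      have h2 : p ≤ p' := hp'pred p hp hpv
      omega
    rw [h1]
    rw [show (S.filter fun w => w = v ∧ chg S w) = {v} from by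
      ext w
      simp only [Finset.mem_filter, Finset.mem_singleton]
      constructor
      · rintro ⟨-, rfl, -⟩; rfl
      · rintro rfl; exact ⟨hv, rfl, hc⟩]
    rfl
  · have h1 : (p + v) % 2 = 0 := by
      by_contra h
      exact hc ⟨p, hp, hpv, hpred, by omega⟩
    rw [h1]
    rw [show (S.filter fun w => w = v ∧ chg S w) = ∅ from by
      ext w
      simp only [Finset.mem_filter, Finset.notMem_empty, iff_false, not_and]
      rintro - rfl
      exact fun h => absurd h hc]
    rfl

lemma exists_pred (S : Finset ℕ) {v : ℕ} (hex : ∃ u ∈ S, u < v) :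
    ∃ p, p ∈ S ∧ p < v ∧ ∀ u ∈ S, u < v → u ≤ p := by
  have hTne : (S.filter fun w => w < v).Nonempty := by
    obtain ⟨u, hu1, hu2⟩ := hex
    exact ⟨u, Finset.mem_filter.mpr ⟨hu1, hu2⟩⟩
  have hm := (S.filter fun w => w < v).max'_mem hTne
  simp only [Finset.mem_filter] at hm
  exact ⟨_, hm.1, hm.2, fun u hu huv =>
    Finset.le_max' (S.filter fun w => w < v) u (Finset.mem_filter.mpr ⟨hu, huv⟩)⟩

lemma beta_parity (S : Finset ℕ) (hmin : ∃ m0 ∈ S, m0 % 2 = 0 ∧ ∀ u ∈ S, m0 ≤ u)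
    {v : ℕ} (hv : v ∈ S) : beta S v % 2 = v % 2 := by
  obtain ⟨m0, hm0S, hm0e, hm0min⟩ := hmin
  induction v using Nat.strong_induction_on with
  | _ v ih =>
    by_cases hex : ∃ u ∈ S, u < v
    · obtain ⟨p, hpS, hpv, hpred⟩ := exists_pred S hex
      rw [beta_step S hv hpS hpv hpred]
      have := ih p hpv hpS
      omega
    · push_neg at hex
      have h0 : beta S v = 0 := beta_min S (fun u hu => hex u hu)
      have : v = m0 := le_antisymm (hex m0 hm0S) (hm0min v hv)
      omega

lemma beta_noskip (S : Finset ℕ) {v : ℕ} (hv : v ∈ S) :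
    ∀ u, u ≤ beta S v → ∃ w ∈ S, w ≤ v ∧ beta S w = u := by
  induction v using Nat.strong_induction_on with
  | _ v ih =>
    intro u hu
    by_cases hex : ∃ u ∈ S, u < v
    · obtain ⟨p, hpS, hpv, hpred⟩ := exists_pred S hex
      rcases eq_or_lt_of_le hu with rfl | hlt
      · exact ⟨v, hv, le_refl _, rfl⟩
      · have hstep := beta_step S hv hpS hpv hpred
        have hup : u ≤ beta S p := by omega
        obtain ⟨w, hw1, hw2, hw3⟩ := ih p hpv hpS u hup
        exact ⟨w, hw1, by omega, hw3⟩
    · push_neg at hex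
      have h0 : beta S v = 0 := beta_min S (fun w hw => hex w hw)
      exact ⟨v, hv, le_refl _, by omega⟩

lemma beta_lt_card (S : Finset ℕ) (hS : S.Nonempty) (v : ℕ) : beta S v < S.card := by
  have hsub : (S.filter fun w => w ≤ v ∧ chg S w) ⊆ S.erase (S.min' hS) := by
    intro w hw
    simp only [Finset.mem_filter] at hw
    obtain ⟨hwS, -, p, hpS, hpw, -, -⟩ := hw
    rw [Finset.mem_erase]
    refine ⟨?_, hwS⟩
    intro heq
    have := S.min'_le p hpS
    omega
  calc beta S v ≤ (S.erase (S.min' hS)).card := Finset.card_le_card hsub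
    _ < S.card := by
        rw [Finset.card_erase_of_mem (S.min'_mem hS)]
        have : 0 < S.card := Finset.card_pos.mpr hS
        omega

end Part2

section Part3

variable {n n' N : ℕ} (K : SetComp n) (K' : SetComp n')

/-- The set compositions appearing in the product `F_K · F_{K'}`. -/
def Good (K'' : SetComp (n + n')) : Prop :=
  (∀ x, (K''.1.2 x : ℕ) % 2 = sumHt K.ht K'.ht x % 2) ∧
  ∀ x y, QLt K K' x y → K''.1.2 x < K''.1.2 y

lemma gstat_parity (r : Fin (n + n') → Fin N) (x : Fin (n + n')) :
    gstat K K' r x % 2 = sumHt K.ht K'.ht x % 2 := by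
  unfold gstat; omega

lemma adm_good_char {K'' : SetComp (n + n')} (hG : Good K K' K'')
    (r : Fin (n + n') → Fin N) :
    NCOrderCond K''.le K''.ht r ↔
      ∀ x y, K''.1.2 x < K''.1.2 y → gstat K K' r x < gstat K K' r y := by
  have h := setComp_char K'' (sumHt K.ht K'.ht) hG.1 r
  simp only [gstat]
  exact h

lemma good_adm_admQ {K'' : SetComp (n + n')} (hG : Good K K' K'')
    {r : Fin (n + n') → Fin N} (hA : NCOrderCond K''.le K''.ht r) :
    NCOrderCond (sumLe K.le K'.le) (sumHt K.ht K'.ht) r := by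
  rw [adm_Q_char]
  intro x y hxy
  exact (adm_good_char K K' hG r).mp hA x y (hG.2 x y hxy)

lemma qlt_below {x : Fin (n + n')} {t : ℕ} (htx : t < sumHt K.ht K'.ht x) :
    ∃ z, QLt K K' z x ∧ sumHt K.ht K'.ht z = t := by
  rcases Nat.lt_or_ge (x : ℕ) n with hx | hx
  · rw [sumHt_left K K'.ht x hx] at htx
    have hlt : t < (K.1.1 : ℕ) := lt_trans htx (K.1.2 ⟨x, hx⟩).isLt
    obtain ⟨z₀, hz⟩ := K.2 ⟨t, hlt⟩
    have hzv := congrArg Fin.val hz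
    simp only [Fin.val_mk] at hzv
    refine ⟨⟨(z₀ : ℕ), by have := z₀.isLt; omega⟩,
      Or.inl ⟨by simp only [Fin.val_mk]; exact z₀.isLt, hx, ?_⟩, ?_⟩
    · rw [Fin.lt_def]; simp only [Fin.val_mk, Fin.eta]; omega
    · rw [sumHt_left K K'.ht _ (by simp only [Fin.val_mk]; exact z₀.isLt)]
      simp only [Fin.val_mk, Fin.eta]; omega
  · rw [sumHt_right K.ht K' x hx] at htx
    have hlt : t < (K'.1.1 : ℕ) :=
      lt_trans htx (K'.1.2 ⟨(x : ℕ) - n, by have := x.isLt; omega⟩).isLt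
    obtain ⟨z₀, hz⟩ := K'.2 ⟨t, hlt⟩
    have hzv := congrArg Fin.val hz
    simp only [Fin.val_mk] at hzv
    refine ⟨⟨n + (z₀ : ℕ), by have := z₀.isLt; omega⟩,
      Or.inr ⟨by simp only [Fin.val_mk]; omega, hx, ?_⟩, ?_⟩
    · rw [Fin.lt_def]
      simp only [Fin.val_mk, Nat.add_sub_cancel_left, Fin.eta]; omega
    · rw [sumHt_right K.ht K' _ (by simp only [Fin.val_mk]; omega)]
      simp only [Fin.val_mk, Nat.add_sub_cancel_left, Fin.eta]; omega

lemma qlt_mid' {x y : Fin (n + n')} (h : QLt K K' x y)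
    (hpar : sumHt K.ht K'.ht x % 2 = sumHt K.ht K'.ht y % 2) :
    ∃ z, QLt K K' x z ∧ QLt K K' z y ∧
      sumHt K.ht K'.ht z = sumHt K.ht K'.ht x + 1 := by
  have h1 : sumHt K.ht K'.ht x < sumHt K.ht K'.ht y := qlt_ht K K' h
  have h2 : sumHt K.ht K'.ht x + 1 < sumHt K.ht K'.ht y := by omega
  obtain ⟨z, hzy, hz⟩ := qlt_below K K' h2
  refine ⟨z, ?_, hzy, hz⟩
  rcases h with ⟨hx, hy, hblk⟩ | ⟨hx, hy, hblk⟩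
  · rcases hzy with ⟨hz1, hz2, hblk2⟩ | ⟨hz1, hz2, hblk2⟩
    · refine Or.inl ⟨hx, hz1, ?_⟩
      rw [Fin.lt_def]
      have e1 := sumHt_left K K'.ht x hx
      have e2 := sumHt_left K K'.ht z hz1
      omega
    · exact absurd hz2 (by omega)
  · rcases hzy with ⟨hz1, hz2, hblk2⟩ | ⟨hz1, hz2, hblk2⟩
    · exact absurd hz2 (by omega)
    · refine Or.inr ⟨hx, hz1, ?_⟩
      rw [Fin.lt_def]
      have e1 := sumHt_right K.ht K' x hx
      have e2 := sumHt_right K.ht K' z hz1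
      omega

lemma gmin_even (hm : 0 < n + n') (r : Fin (n + n') → Fin N)
    (hQ : ∀ x y, QLt K K' x y → gstat K K' r x < gstat K K' r y) :
    ∃ m0 ∈ Finset.univ.image (gstat K K' r), m0 % 2 = 0 ∧
      ∀ u ∈ Finset.univ.image (gstat K K' r), m0 ≤ u := by
  set Sg := Finset.univ.image (gstat K K' r) with hSgdef
  have hne : Sg.Nonempty :=
    ⟨gstat K K' r ⟨0, hm⟩, Finset.mem_image_of_mem _ (Finset.mem_univ _)⟩
  refine ⟨Sg.min' hne, Sg.min'_mem hne, ?_, fun u hu => Sg.min'_le u hu⟩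
  obtain ⟨x0, -, hx0⟩ := Finset.mem_image.mp (Sg.min'_mem hne)
  by_contra hodd
  have hpar := gstat_parity K K' r x0
  have hodd' : 0 < sumHt K.ht K'.ht x0 := by omega
  obtain ⟨z, hz, -⟩ := qlt_below K K' hodd'
  have h1 := hQ z x0 hz
  have h2 : gstat K K' r z ∈ Sg := Finset.mem_image_of_mem _ (Finset.mem_univ _)
  have h3 := Sg.min'_le _ h2
  omega

lemma exists_good_adm (hm : 0 < n + n') (r : Fin (n + n') → Fin N)
    (hadm : NCOrderCond (sumLe K.le K'.le) (sumHt K.ht K'.ht) r) :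
    ∃ K'' : SetComp (n + n'), Good K K' K'' ∧ NCOrderCond K''.le K''.ht r := by
  have hQ := (adm_Q_char K K' r).mp hadm
  set Sg := Finset.univ.image (gstat K K' r) with hSgdef
  have hne : Sg.Nonempty :=
    ⟨gstat K K' r ⟨0, hm⟩, Finset.mem_image_of_mem _ (Finset.mem_univ _)⟩
  have hminev := gmin_even K K' hm r hQ
  have hmemS : ∀ x, gstat K K' r x ∈ Sg :=
    fun x => Finset.mem_image_of_mem _ (Finset.mem_univ _)
  have hparβ : ∀ x, beta Sg (gstat K K' r x) % 2 = sumHt K.ht K'.ht x % 2 := fun x => by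
    rw [beta_parity Sg hminev (hmemS x)]; exact gstat_parity K K' r x
  have hβlt : ∀ x, beta Sg (gstat K K' r x) < beta Sg (Sg.max' hne) + 1 :=
    fun x => Nat.lt_succ_of_le (beta_mono Sg (Sg.le_max' _ (hmemS x)))
  have hqle : beta Sg (Sg.max' hne) + 1 < n + n' + 1 := by
    have h1 := beta_lt_card Sg hne (Sg.max' hne)
    have h2 : Sg.card ≤ n + n' := le_trans Finset.card_image_le (by simp)
    omega
  have hsurj : Function.Surjective
      (fun x => (⟨beta Sg (gstat K K' r x), hβlt x⟩ : Fin (beta Sg (Sg.max' hne) + 1))) := by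
    intro u
    have hu : (u : ℕ) ≤ beta Sg (Sg.max' hne) := by have := u.isLt; omega
    obtain ⟨w, hwS, -, hwβ⟩ := beta_noskip Sg (Sg.max'_mem hne) (u : ℕ) hu
    obtain ⟨x, -, hx⟩ := Finset.mem_image.mp hwS
    refine ⟨x, ?_⟩
    apply Fin.ext
    simp only [Fin.val_mk]
    rw [hx, hwβ]
  refine ⟨⟨⟨⟨beta Sg (Sg.max' hne) + 1, hqle⟩,
    fun x => ⟨beta Sg (gstat K K' r x), hβlt x⟩⟩, hsurj⟩, ?_, ?_⟩
  case _ =>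
    constructor
    · intro x
      show beta Sg (gstat K K' r x) % 2 = _
      exact hparβ x
    · intro x y hxy
      rw [Fin.lt_def]
      show beta Sg (gstat K K' r x) < beta Sg (gstat K K' r y)
      have hgxy := hQ x y hxy
      by_cases hpar : sumHt K.ht K'.ht x % 2 = sumHt K.ht K'.ht y % 2
      · obtain ⟨z, hxz, hzy, hz⟩ := qlt_mid' K K' hxy hpar
        have hg1 := hQ x z hxz
        have hg2 := hQ z y hzy
        have b1 : beta Sg (gstat K K' r x) ≤ beta Sg (gstat K K' r z) :=
          beta_mono Sg (le_of_lt hg1)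
        have b2 : beta Sg (gstat K K' r z) ≤ beta Sg (gstat K K' r y) :=
          beta_mono Sg (le_of_lt hg2)
        have p1 := hparβ x
        have p2 := hparβ z
        omega
      · have b1 : beta Sg (gstat K K' r x) ≤ beta Sg (gstat K K' r y) :=
          beta_mono Sg (le_of_lt hgxy)
        have p1 := hparβ x
        have p2 := hparβ y
        omega
  case _ =>
    rw [adm_good_char K K' (K'' := ⟨⟨⟨beta Sg (Sg.max' hne) + 1, hqle⟩,
      fun x => ⟨beta Sg (gstat K K' r x), hβlt x⟩⟩, hsurj⟩)]
    · intro x y hxy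
      rw [Fin.lt_def] at hxy
      have hxy' : beta Sg (gstat K K' r x) < beta Sg (gstat K K' r y) := hxy
      by_contra hc
      push_neg at hc
      have := beta_mono Sg hc
      omega
    · constructor
      · intro x
        show beta Sg (gstat K K' r x) % 2 = _
        exact hparβ x
      · intro x y hxy
        rw [Fin.lt_def]
        show beta Sg (gstat K K' r x) < beta Sg (gstat K K' r y)
        have hgxy := hQ x y hxy
        by_cases hpar : sumHt K.ht K'.ht x % 2 = sumHt K.ht K'.ht y % 2
        · obtain ⟨z, hxz, hzy, hz⟩ := qlt_mid' K K' hxy hpar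
          have hg1 := hQ x z hxz
          have hg2 := hQ z y hzy
          have b1 : beta Sg (gstat K K' r x) ≤ beta Sg (gstat K K' r z) :=
            beta_mono Sg (le_of_lt hg1)
          have b2 : beta Sg (gstat K K' r z) ≤ beta Sg (gstat K K' r y) :=
            beta_mono Sg (le_of_lt hg2)
          have p1 := hparβ x
          have p2 := hparβ z
          omega
        · have b1 : beta Sg (gstat K K' r x) ≤ beta Sg (gstat K K' r y) :=
            beta_mono Sg (le_of_lt hgxy)
          have p1 := hparβ x
          have p2 := hparβ y
          omega

end Part3

section Part3b

variable {n n' N : ℕ} (K : SetComp n) (K' : SetComp n')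

lemma setcomp_ext {m : ℕ} {A B : SetComp m} (h1 : (A.1.1 : ℕ) = (B.1.1 : ℕ))
    (h2 : ∀ x, (A.1.2 x : ℕ) = (B.1.2 x : ℕ)) : A = B := by
  obtain ⟨⟨la, fa⟩, ha⟩ := A
  obtain ⟨⟨lb, fb⟩, hb⟩ := B
  simp only at h1 h2
  apply Subtype.ext
  have hl : la = lb := Fin.ext h1
  subst hl
  have : fa = fb := funext fun x => Fin.ext (h2 x)
  subst this
  rfl

lemma good_adm_blk (hm : 0 < n + n') (r : Fin (n + n') → Fin N)
    (hadm : NCOrderCond (sumLe K.le K'.le) (sumHt K.ht K'.ht) r)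
    {KK : SetComp (n + n')} (hG : Good K K' KK) (hA : NCOrderCond KK.le KK.ht r) :
    (∀ x, (KK.1.2 x : ℕ) = beta (Finset.univ.image (gstat K K' r)) (gstat K K' r x)) ∧
      ∀ x, (KK.1.1 : ℕ) =
        beta (Finset.univ.image (gstat K K' r))
          ((Finset.univ.image (gstat K K' r)).max'
            ⟨gstat K K' r x, Finset.mem_image_of_mem _ (Finset.mem_univ _)⟩) + 1 := by
  have hQ := (adm_Q_char K K' r).mp hadm
  set Sg := Finset.univ.image (gstat K K' r) with hSgdef
  have hne : Sg.Nonempty :=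
    ⟨gstat K K' r ⟨0, hm⟩, Finset.mem_image_of_mem _ (Finset.mem_univ _)⟩
  have hminev := gmin_even K K' hm r hQ
  have hmemS : ∀ x, gstat K K' r x ∈ Sg :=
    fun x => Finset.mem_image_of_mem _ (Finset.mem_univ _)
  have hA' := (adm_good_char K K' hG r).mp hA
  have f2 : ∀ x y, gstat K K' r x ≤ gstat K K' r y → (KK.1.2 x : ℕ) ≤ (KK.1.2 y : ℕ) := by
    intro x y hg
    by_contra hc
    push_neg at hc
    have := hA' y x (Fin.lt_def.mpr hc)
    omega
  have hmain : ∀ v, v ∈ Sg → ∀ x, gstat K K' r x = v → (KK.1.2 x : ℕ) = beta Sg v := by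
    intro v
    induction v using Nat.strong_induction_on with
    | _ v ih =>
      intro hv x hx
      by_cases hex : ∃ u ∈ Sg, u < v
      · obtain ⟨p, hpS, hpv, hpred⟩ := exists_pred Sg hex
        obtain ⟨xp, -, hxp⟩ := Finset.mem_image.mp hpS
        have ihp := ih p hpv hpS xp hxp
        have hle : (KK.1.2 xp : ℕ) ≤ (KK.1.2 x : ℕ) := f2 xp x (by omega)
        have hnoskip : ¬ ((KK.1.2 xp : ℕ) + 1 < (KK.1.2 x : ℕ)) := by
          intro hsk
          have hltq : (KK.1.2 xp : ℕ) + 1 < (KK.1.1 : ℕ) := lt_trans hsk (KK.1.2 x).isLt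
          obtain ⟨z, hz⟩ := KK.2 ⟨_, hltq⟩
          have hzv := congrArg Fin.val hz
          simp only [Fin.val_mk] at hzv
          have hg1 := hA' xp z (Fin.lt_def.mpr (by omega))
          have hg2 := hA' z x (Fin.lt_def.mpr (by omega))
          have hzS := hmemS z
          have := hpred _ hzS (by omega)
          omega
        have hpar1 := hG.1 x
        have hpar2 := hG.1 xp
        have hgp1 := gstat_parity K K' r x
        have hgp2 := gstat_parity K K' r xp
        have hβ := beta_step Sg hv hpS hpv hpred
        omega
      · push_neg at hex
        have hβ0 : beta Sg v = 0 := beta_min Sg hex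
        by_contra hc
        have h0 : 0 < (KK.1.2 x : ℕ) := by omega
        have h0q : 0 < (KK.1.1 : ℕ) := by have := (KK.1.2 x).isLt; omega
        obtain ⟨z, hz⟩ := KK.2 ⟨0, h0q⟩
        have hzv := congrArg Fin.val hz
        simp only [Fin.val_mk] at hzv
        have hg := hA' z x (Fin.lt_def.mpr (by omega))
        have := hex _ (hmemS z)
        omega
  refine ⟨fun x => hmain _ (hmemS x) x rfl, fun x₀ => ?_⟩
  have hne' : Sg.Nonempty := ⟨gstat K K' r x₀, hmemS x₀⟩
  show (KK.1.1 : ℕ) = beta Sg (Sg.max' hne') + 1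
  have hM : Sg.max' hne' ∈ Sg := Sg.max'_mem hne'
  obtain ⟨xm, -, hxm⟩ := Finset.mem_image.mp hM
  have h1 : (KK.1.2 xm : ℕ) = beta Sg (Sg.max' hne') := hmain _ hM xm hxm
  have h2 : 0 < (KK.1.1 : ℕ) := by have := (KK.1.2 xm).isLt; omega
  obtain ⟨xt, hxt⟩ := KK.2 ⟨(KK.1.1 : ℕ) - 1, by omega⟩
  have hxtv := congrArg Fin.val hxt
  simp only [Fin.val_mk] at hxtv
  have h3 : (KK.1.2 xt : ℕ) = beta Sg (gstat K K' r xt) := hmain _ (hmemS xt) xt rfl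
  have h4 : beta Sg (gstat K K' r xt) ≤ beta Sg (Sg.max' hne') :=
    beta_mono Sg (Sg.le_max' _ (hmemS xt))
  have h5 : (KK.1.2 xm : ℕ) < (KK.1.1 : ℕ) := (KK.1.2 xm).isLt
  omega

lemma good_adm_unique (hm : 0 < n + n') (r : Fin (n + n') → Fin N)
    (hadm : NCOrderCond (sumLe K.le K'.le) (sumHt K.ht K'.ht) r)
    {K1 K2 : SetComp (n + n')} (hG1 : Good K K' K1) (hA1 : NCOrderCond K1.le K1.ht r)
    (hG2 : Good K K' K2) (hA2 : NCOrderCond K2.le K2.ht r) : K1 = K2 := by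
  obtain ⟨hb1, hl1⟩ := good_adm_blk K K' hm r hadm hG1 hA1
  obtain ⟨hb2, hl2⟩ := good_adm_blk K K' hm r hadm hG2 hA2
  apply setcomp_ext
  · rw [hl1 ⟨0, hm⟩, hl2 ⟨0, hm⟩]
  · intro x
    rw [hb1 x, hb2 x]

end Part3b

section Part4

lemma ncF_of_zero {n : ℕ} (hn : n = 0) (le : Fin n → Fin n → Prop) (ht : Fin n → ℕ)
    (N : ℕ) : ncF le ht N = 1 := by
  subst hn
  rw [ncF]
  rw [Fintype.sum_unique]
  rw [if_pos ⟨fun x => x.elim0, fun x => x.elim0⟩]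
  simp only [List.ofFn_zero]
  exact map_one (MonoidAlgebra.of ℚ (FreeMonoid ℕ))

lemma setcomp_subsingleton {m : ℕ} (hm : m = 0) (A B : SetComp m) : A = B := by
  apply setcomp_ext
  · have h1 := A.1.1.isLt
    have h2 := B.1.1.isLt
    omega
  · intro x
    subst hm
    exact x.elim0

end Part4


/-- For set compositions `K` of `{1,…,n}` and `K'` of `{1,…,n'}`, the
product `𝐅_{P_K}^(N) · 𝐅_{P_{K'}}^(N)` is a linear combination with nonnegative integer
coefficients of the `𝐅_{P_{K''}}^(N)`, `K''` ranging over the set compositions of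
`{1,…,n+n'}`, simultaneously for every `N ≥ 1`. -/
theorem stmt19 (n n' : ℕ) (K : SetComp n) (K' : SetComp n') :
    ∃ c : SetComp (n + n') → ℕ, ∀ N : ℕ, 1 ≤ N →
      ncF K.le K.ht N * ncF K'.le K'.ht N =
        ∑ K'' : SetComp (n + n'), (c K'' : ℚ) • ncF K''.le K''.ht N := by
  by_cases hm : 0 < n + n'
  · refine ⟨fun K'' => if Good K K' K'' then 1 else 0, fun N _ => ?_⟩
    rw [ncF_mul K K', ncF]
    have hswap : ∑ K'' : SetComp (n + n'),
        (((if Good K K' K'' then (1 : ℕ) else 0) : ℕ) : ℚ) • ncF K''.le K''.ht N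
        = ∑ r : Fin (n + n') → Fin N, ∑ K'' : SetComp (n + n'),
            if Good K K' K'' ∧ NCOrderCond K''.le K''.ht r then
              MonoidAlgebra.of ℚ (FreeMonoid ℕ)
                (FreeMonoid.ofList (List.ofFn fun i => (r i : ℕ)))
            else 0 := by
      rw [Finset.sum_comm]
      apply Finset.sum_congr rfl
      intro K'' _
      rw [ncF, Finset.smul_sum]
      apply Finset.sum_congr rfl
      intro r _
      by_cases hG : Good K K' K'' <;> by_cases hA : NCOrderCond K''.le K''.ht r <;>
        simp [hG, hA]
    rw [hswap]
    apply Finset.sum_congr rfl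
    intro r _
    by_cases hr : NCOrderCond (sumLe K.le K'.le) (sumHt K.ht K'.ht) r
    · rw [if_pos hr]
      obtain ⟨K0, hG0, hA0⟩ := exists_good_adm K K' hm r hr
      have huniq : ∀ K'' : SetComp (n + n'),
          (Good K K' K'' ∧ NCOrderCond K''.le K''.ht r) ↔ K'' = K0 := by
        intro K''
        constructor
        · rintro ⟨hG, hA⟩
          exact good_adm_unique K K' hm r hr hG hA hG0 hA0
        · rintro rfl
          exact ⟨hG0, hA0⟩
      simp only [huniq]
      rw [Finset.sum_ite_eq' Finset.univ K0]
      rw [if_pos (Finset.mem_univ K0)]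
    · rw [if_neg hr]
      exact (Finset.sum_eq_zero (fun K'' _ =>
        if_neg (fun h => hr (good_adm_admQ K K' h.1 h.2)))).symm
  · have hm0 : n + n' = 0 := by omega
    refine ⟨fun _ => 1, fun N _ => ?_⟩
    have hK0 : ∃ K0 : SetComp (n + n'), True := by
      refine ⟨⟨⟨⟨0, by omega⟩, fun x => absurd x.isLt (by omega)⟩,
        fun b => absurd b.isLt (by omega)⟩, trivial⟩
    obtain ⟨K0, -⟩ := hK0
    have huniv : (Finset.univ : Finset (SetComp (n + n'))) = {K0} := by
      apply Finset.eq_singleton_iff_unique_mem.mpr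
      exact ⟨Finset.mem_univ _, fun A _ => setcomp_subsingleton hm0 A K0⟩
    rw [ncF_of_zero (by omega) K.le K.ht N, ncF_of_zero (by omega) K'.le K'.ht N,
      huniv, Finset.sum_singleton, ncF_of_zero hm0 K0.le K0.ht N]
    simp
end
end
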